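/- Let T be a bounded operator on a complex Hilbert space H and let C > 0 satisfy ‖Σ_{j=0}^{N−1} (N−j) λ^j T^j‖ ≤ C·N² for every integer N ≥ 1 and every λ ∈ ℂ with |λ| = 1. Let 0 < M₁ < M₂ < N be integers and let x ∈ H with ‖x‖ = 1 and T^N x ≠ 0. Then Σ_{j=M₁}^{M₂−1} ‖T^{N−j} x‖²/‖T^N x‖² ≥ (M₂ − M₁)²/(16 C² M₂²). -/

import Mathlib

lemma orth_sum {M : ℕ} (hM : 0 < M) {ω : ℂ} (hω : IsPrimitiveRoot ω M)
    {j j' : ℕ} (hj : j < M) (hj' : j' < M) :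
    ∑ k ∈ Finset.range M, (starRingEnd ℂ) ((ω ^ k) ^ j) * (ω ^ k) ^ j'
      = if j = j' then (M : ℂ) else 0 := by
  have hω1 : ω ^ M = 1 := hω.pow_eq_one
  have hωne : ω ≠ 0 := hω.ne_zero hM.ne'
  have hnorm : ‖ω‖ = 1 := Complex.norm_eq_one_of_pow_eq_one hω1 hM.ne'
  have hconj : (starRingEnd ℂ) ω = ω⁻¹ := (Complex.inv_eq_conj hnorm).symm
  have hterm : ∀ k : ℕ, (starRingEnd ℂ) ((ω ^ k) ^ j) * (ω ^ k) ^ j'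
      = (((ω ^ j)⁻¹ * ω ^ j') : ℂ) ^ k := by
    intro k
    rw [map_pow, map_pow, hconj]
    ring
  simp only [hterm]
  set ζ : ℂ := (ω ^ j)⁻¹ * ω ^ j' with hζ
  by_cases h : j = j'
  · subst h
    have : ζ = 1 := inv_mul_cancel₀ (pow_ne_zero _ hωne)
    simp [this]
  · rw [if_neg h]
    have hζ1 : ζ ≠ 1 := by
      intro he
      rw [hζ, inv_mul_eq_one₀ (pow_ne_zero _ hωne)] at he
      exact h (hω.pow_inj hj hj' he)
    have h1 : (ω ^ j) ^ M = 1 := by rw [pow_right_comm, hω1, one_pow]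
    have h2 : (ω ^ j') ^ M = 1 := by rw [pow_right_comm, hω1, one_pow]
    have hζM : ζ ^ M = 1 := by
      rw [hζ, mul_pow, inv_pow, h1, h2, inv_one, one_mul]
    rw [geom_sum_eq hζ1, hζM, sub_self, zero_div]

open scoped InnerProductSpace in
lemma parseval_disc {H : Type*} [NormedAddCommGroup H] [InnerProductSpace ℂ H]
    {M : ℕ} (hM : 0 < M) {ω : ℂ} (hω : IsPrimitiveRoot ω M) (a : ℕ → H) :
    ∑ k ∈ Finset.range M, ‖∑ j ∈ Finset.range M, (ω ^ k) ^ j • a j‖ ^ 2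
      = M * ∑ j ∈ Finset.range M, ‖a j‖ ^ 2 := by
  have key : ∀ k ∈ Finset.range M, (‖∑ j ∈ Finset.range M, (ω ^ k) ^ j • a j‖ : ℝ) ^ 2
      = RCLike.re (∑ j ∈ Finset.range M, ∑ j' ∈ Finset.range M,
          ((starRingEnd ℂ) ((ω ^ k) ^ j) * (ω ^ k) ^ j') * ⟪a j, a j'⟫_ℂ) := by
    intro k _
    rw [← inner_self_eq_norm_sq (𝕜 := ℂ)]
    congr 1
    rw [sum_inner]
    refine Finset.sum_congr rfl fun j _ => ?_
    rw [inner_smul_left, inner_sum, Finset.mul_sum]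
    refine Finset.sum_congr rfl fun j' _ => ?_
    rw [inner_smul_right]
    ring
  rw [Finset.sum_congr rfl key, ← map_sum, Finset.sum_comm]
  have step : ∀ j ∈ Finset.range M, ∑ k ∈ Finset.range M, ∑ j' ∈ Finset.range M,
        ((starRingEnd ℂ) ((ω ^ k) ^ j) * (ω ^ k) ^ j') * ⟪a j, a j'⟫_ℂ
      = (M : ℂ) * ((‖a j‖ : ℂ)) ^ 2 := by
    intro j hj
    rw [Finset.sum_comm]
    have : ∀ j' ∈ Finset.range M, ∑ k ∈ Finset.range M,
          ((starRingEnd ℂ) ((ω ^ k) ^ j) * (ω ^ k) ^ j') * ⟪a j, a j'⟫_ℂ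
        = (if j = j' then (M : ℂ) else 0) * ⟪a j, a j'⟫_ℂ := by
      intro j' hj'
      rw [← Finset.sum_mul, orth_sum hM hω (Finset.mem_range.mp hj) (Finset.mem_range.mp hj')]
    rw [Finset.sum_congr rfl this]
    simp [Finset.mem_range.mp hj, inner_self_eq_norm_sq_to_K]
  rw [Finset.sum_congr rfl step]
  have : ∑ j ∈ Finset.range M, (M : ℂ) * ((‖a j‖ : ℂ)) ^ 2
      = (((M : ℝ) * ∑ j ∈ Finset.range M, ‖a j‖ ^ 2 : ℝ) : ℂ) := by
    push_cast [Finset.mul_sum]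
    ring
  rw [this]
  exact RCLike.ofReal_re _

lemma weighted_pow_bound {H : Type*} [NormedAddCommGroup H] [InnerProductSpace ℂ H]
    [CompleteSpace H] (A : H →L[ℂ] H) (C : ℝ)
    (hA : ∀ M : ℕ, 1 ≤ M → ∀ z : ℂ, ‖z‖ = 1 →
      ‖∑ j ∈ Finset.range M, (((M : ℂ) - (j : ℂ)) * z ^ j) • A ^ j‖ ≤ C * (M : ℝ) ^ 2)
    (M : ℕ) (hM : 1 ≤ M) (v : H) :
    ∑ j ∈ Finset.range M, ((M : ℝ) - (j : ℝ)) ^ 2 * ‖(A ^ j) v‖ ^ 2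
      ≤ (C * (M : ℝ) ^ 2) ^ 2 * ‖v‖ ^ 2 := by
  have hM0 : (M : ℝ) > 0 := by exact_mod_cast hM
  set ω : ℂ := Complex.exp (2 * Real.pi * Complex.I / M) with hωdef
  have hω : IsPrimitiveRoot ω M := Complex.isPrimitiveRoot_exp M (Nat.one_le_iff_ne_zero.mp hM)
  have hωnorm : ‖ω‖ = 1 :=
    Complex.norm_eq_one_of_pow_eq_one hω.pow_eq_one (Nat.one_le_iff_ne_zero.mp hM)
  set a : ℕ → H := fun j => (((M : ℂ) - (j : ℂ))) • (A ^ j) v with ha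
  have hpar := parseval_disc hM (hω := hω) a
  have happ : ∀ k : ℕ, ∑ j ∈ Finset.range M, (ω ^ k) ^ j • a j
      = (∑ j ∈ Finset.range M, (((M : ℂ) - (j : ℂ)) * (ω ^ k) ^ j) • A ^ j) v := by
    intro k
    rw [ContinuousLinearMap.sum_apply]
    refine Finset.sum_congr rfl fun j _ => ?_
    rw [ContinuousLinearMap.smul_apply, ha]
    simp only [mul_smul, mul_comm]
    rw [smul_comm]
  have hbd : ∀ k ∈ Finset.range M, ‖∑ j ∈ Finset.range M, (ω ^ k) ^ j • a j‖ ^ 2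
      ≤ ((C * (M : ℝ) ^ 2) * ‖v‖) ^ 2 := by
    intro k _
    have h1 : ‖∑ j ∈ Finset.range M, (ω ^ k) ^ j • a j‖ ≤ (C * (M : ℝ) ^ 2) * ‖v‖ := by
      rw [happ k]
      calc ‖(∑ j ∈ Finset.range M, (((M : ℂ) - (j : ℂ)) * (ω ^ k) ^ j) • A ^ j) v‖
          ≤ ‖∑ j ∈ Finset.range M, (((M : ℂ) - (j : ℂ)) * (ω ^ k) ^ j) • A ^ j‖ * ‖v‖ :=
            ContinuousLinearMap.le_opNorm _ _
        _ ≤ (C * (M : ℝ) ^ 2) * ‖v‖ := by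
            apply mul_le_mul_of_nonneg_right _ (norm_nonneg v)
            exact hA M hM _ (by rw [norm_pow, hωnorm, one_pow])
    exact pow_le_pow_left₀ (norm_nonneg _) h1 2
  have hup : (M : ℝ) * ∑ j ∈ Finset.range M, ‖a j‖ ^ 2
      ≤ (M : ℝ) * ((C * (M : ℝ) ^ 2) * ‖v‖) ^ 2 := by
    rw [← hpar]
    calc ∑ k ∈ Finset.range M, ‖∑ j ∈ Finset.range M, (ω ^ k) ^ j • a j‖ ^ 2
        ≤ ∑ k ∈ Finset.range M, ((C * (M : ℝ) ^ 2) * ‖v‖) ^ 2 := Finset.sum_le_sum hbd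
      _ = (M : ℝ) * ((C * (M : ℝ) ^ 2) * ‖v‖) ^ 2 := by
          rw [Finset.sum_const, Finset.card_range, nsmul_eq_mul]
  have hsum : ∑ j ∈ Finset.range M, ‖a j‖ ^ 2
      = ∑ j ∈ Finset.range M, ((M : ℝ) - (j : ℝ)) ^ 2 * ‖(A ^ j) v‖ ^ 2 := by
    refine Finset.sum_congr rfl fun j hj => ?_
    have hjM : (j : ℝ) ≤ (M : ℝ) := by
      exact_mod_cast (Finset.mem_range.mp hj).le
    rw [ha]
    simp only [norm_smul, mul_pow]
    congr 1
    rw [← Complex.ofReal_natCast, ← Complex.ofReal_natCast, ← Complex.ofReal_sub,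
      Complex.norm_real, Real.norm_eq_abs, sq_abs]
  rw [hsum] at hup
  have := (mul_le_mul_iff_right₀ hM0).mp hup
  calc ∑ j ∈ Finset.range M, ((M : ℝ) - (j : ℝ)) ^ 2 * ‖(A ^ j) v‖ ^ 2
      ≤ ((C * (M : ℝ) ^ 2) * ‖v‖) ^ 2 := this
    _ = (C * (M : ℝ) ^ 2) ^ 2 * ‖v‖ ^ 2 := by ring

lemma kreiss_star {H : Type*} [NormedAddCommGroup H] [InnerProductSpace ℂ H]
    [CompleteSpace H] (T : H →L[ℂ] H) (C : ℝ)
    (hT : ∀ N : ℕ, 1 ≤ N → ∀ z : ℂ, ‖z‖ = 1 →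
      ‖∑ j ∈ Finset.range N, (((N : ℂ) - (j : ℂ)) * z ^ j) • T ^ j‖ ≤ C * (N : ℝ) ^ 2) :
    ∀ M : ℕ, 1 ≤ M → ∀ z : ℂ, ‖z‖ = 1 →
      ‖∑ j ∈ Finset.range M, (((M : ℂ) - (j : ℂ)) * z ^ j) • (star T) ^ j‖ ≤ C * (M : ℝ) ^ 2 := by
  intro M hM z hz
  have key : ∑ j ∈ Finset.range M, (((M : ℂ) - (j : ℂ)) * z ^ j) • (star T) ^ j
      = star (∑ j ∈ Finset.range M, (((M : ℂ) - (j : ℂ)) * ((starRingEnd ℂ) z) ^ j) • T ^ j) := by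
    rw [star_sum]
    refine Finset.sum_congr rfl fun j _ => ?_
    rw [star_smul, star_pow]
    congr 1
    simp [map_mul, map_pow, map_sub, Complex.conj_conj]
  rw [key, norm_star]
  exact hT M hM _ (by rw [RCLike.norm_conj, hz])

open scoped InnerProductSpace in
/-- If `‖∑_{j<N} (N-j) λ^j T^j‖ ≤ C N²` for all `N ≥ 1` and unimodular `λ`, then for integers
`0 < M₁ < M₂ < N` and a unit vector `x` with `T^N x ≠ 0`,
`∑_{M₁ ≤ j < M₂} ‖T^{N-j} x‖² / ‖T^N x‖² ≥ (M₂ - M₁)² / (16 C² M₂²)`. -/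
theorem stmt_10 {H : Type*} [NormedAddCommGroup H] [InnerProductSpace ℂ H] [CompleteSpace H]
    (T : H →L[ℂ] H) (C : ℝ) (hC : 0 < C)
    (hT : ∀ N : ℕ, 1 ≤ N → ∀ z : ℂ, ‖z‖ = 1 →
      ‖∑ j ∈ Finset.range N, (((N : ℂ) - (j : ℂ)) * z ^ j) • T ^ j‖ ≤ C * (N : ℝ) ^ 2)
    (M₁ M₂ N : ℕ) (hM₁ : 0 < M₁) (hM₁₂ : M₁ < M₂) (hM₂N : M₂ < N)
    (x : H) (hx : ‖x‖ = 1) (hTN : (T ^ N) x ≠ 0) :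
    ((M₂ : ℝ) - (M₁ : ℝ)) ^ 2 / (16 * C ^ 2 * (M₂ : ℝ) ^ 2) ≤
      ∑ j ∈ Finset.Ico M₁ M₂, ‖(T ^ (N - j)) x‖ ^ 2 / ‖(T ^ N) x‖ ^ 2 := by
  set u : H := (T ^ N) x with hu
  have hu0 : 0 < ‖u‖ := norm_pos_iff.mpr hTN
  set A : H →L[ℂ] H := star T with hA
  have hAK := kreiss_star T C hT
  set S : ℝ := ∑ j ∈ Finset.Ico M₁ M₂, ‖(T ^ (N - j)) x‖ ^ 2 with hS
  set R : ℝ := ∑ j ∈ Finset.Ico M₁ M₂, ‖(A ^ j) u‖ ^ 2 with hR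
  have hM₂0 : (0 : ℝ) < (M₂ : ℝ) := by exact_mod_cast hM₁.trans hM₁₂
  have stepA : ∀ j ∈ Finset.Ico M₁ M₂, ‖u‖ ^ 2 ≤ ‖(T ^ (N - j)) x‖ * ‖(A ^ j) u‖ := by
    intro j hj
    have hjN : j ≤ N := le_of_lt ((Finset.mem_Ico.mp hj).2.trans hM₂N)
    have hfac : u = (T ^ j) ((T ^ (N - j)) x) := by
      rw [hu, ← ContinuousLinearMap.mul_apply, ← pow_add, Nat.add_sub_cancel' hjN]
    have h1 : (‖u‖ : ℝ) ^ 2 = RCLike.re (⟪(T ^ (N - j)) x, (A ^ j) u⟫_ℂ) := by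
      rw [← inner_self_eq_norm_sq (𝕜 := ℂ)]
      congr 1
      rw [hA, ← star_pow, ContinuousLinearMap.star_eq_adjoint,
        ContinuousLinearMap.adjoint_inner_right, ← hfac]
    rw [h1]
    exact re_inner_le_norm _ _
  have stepB : (((M₂ : ℝ) - (M₁ : ℝ)) * ‖u‖ ^ 2) ^ 2 ≤ S * R := by
    have hcount : ∑ j ∈ Finset.Ico M₁ M₂, ‖u‖ ^ 2 = ((M₂ : ℝ) - (M₁ : ℝ)) * ‖u‖ ^ 2 := by
      rw [Finset.sum_const, Nat.card_Ico, nsmul_eq_mul]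
      congr 1
      exact_mod_cast Nat.cast_sub hM₁₂.le
    have h2 : ((M₂ : ℝ) - (M₁ : ℝ)) * ‖u‖ ^ 2
        ≤ ∑ j ∈ Finset.Ico M₁ M₂, ‖(T ^ (N - j)) x‖ * ‖(A ^ j) u‖ := by
      rw [← hcount]
      exact Finset.sum_le_sum stepA
    have h3 := Finset.sum_mul_sq_le_sq_mul_sq (Finset.Ico M₁ M₂)
      (fun j => ‖(T ^ (N - j)) x‖) (fun j => ‖(A ^ j) u‖)
    have h4 : 0 ≤ ((M₂ : ℝ) - (M₁ : ℝ)) * ‖u‖ ^ 2 := by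
      have h5 : (M₁ : ℝ) ≤ (M₂ : ℝ) := by exact_mod_cast hM₁₂.le
      have : 0 ≤ (M₂ : ℝ) - (M₁ : ℝ) := by linarith
      positivity
    calc (((M₂ : ℝ) - (M₁ : ℝ)) * ‖u‖ ^ 2) ^ 2
        ≤ (∑ j ∈ Finset.Ico M₁ M₂, ‖(T ^ (N - j)) x‖ * ‖(A ^ j) u‖) ^ 2 :=
          pow_le_pow_left₀ h4 h2 2
      _ ≤ S * R := h3
  have stepC : R ≤ 16 * C ^ 2 * (M₂ : ℝ) ^ 2 * ‖u‖ ^ 2 := by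
    have hbig := weighted_pow_bound A C hAK (2 * M₂) (by omega) u
    have hsub : (M₂ : ℝ) ^ 2 * R ≤ ∑ j ∈ Finset.range (2 * M₂),
        (((2 * M₂ : ℕ) : ℝ) - (j : ℝ)) ^ 2 * ‖(A ^ j) u‖ ^ 2 := by
      rw [hR, Finset.mul_sum]
      have hle : ∀ j ∈ Finset.Ico M₁ M₂, (M₂ : ℝ) ^ 2 * ‖(A ^ j) u‖ ^ 2
          ≤ (((2 * M₂ : ℕ) : ℝ) - (j : ℝ)) ^ 2 * ‖(A ^ j) u‖ ^ 2 := by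
        intro j hj
        have hjM : (j : ℝ) ≤ (M₂ : ℝ) := by exact_mod_cast (Finset.mem_Ico.mp hj).2.le
        have hsq : (M₂ : ℝ) ^ 2 ≤ (((2 * M₂ : ℕ) : ℝ) - (j : ℝ)) ^ 2 := by
          push_cast
          nlinarith [hM₂0]
        exact mul_le_mul_of_nonneg_right hsq (sq_nonneg _)
      calc ∑ j ∈ Finset.Ico M₁ M₂, (M₂ : ℝ) ^ 2 * ‖(A ^ j) u‖ ^ 2
          ≤ ∑ j ∈ Finset.Ico M₁ M₂, (((2 * M₂ : ℕ) : ℝ) - (j : ℝ)) ^ 2 * ‖(A ^ j) u‖ ^ 2 :=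
            Finset.sum_le_sum hle
        _ ≤ ∑ j ∈ Finset.range (2 * M₂),
              (((2 * M₂ : ℕ) : ℝ) - (j : ℝ)) ^ 2 * ‖(A ^ j) u‖ ^ 2 := by
            apply Finset.sum_le_sum_of_subset_of_nonneg
            · intro j hj
              rw [Finset.mem_range]
              have := (Finset.mem_Ico.mp hj).2
              omega
            · intro j _ _
              positivity
    have hfin : (M₂ : ℝ) ^ 2 * R ≤ (M₂ : ℝ) ^ 2 * (16 * C ^ 2 * (M₂ : ℝ) ^ 2 * ‖u‖ ^ 2) := by
      refine hsub.trans (hbig.trans_eq ?_)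
      push_cast
      ring
    exact le_of_mul_le_mul_left hfin (by positivity)
  have hS0 : 0 ≤ S := Finset.sum_nonneg fun _ _ => sq_nonneg _
  have h6 : S * R ≤ S * (16 * C ^ 2 * (M₂ : ℝ) ^ 2 * ‖u‖ ^ 2) :=
    mul_le_mul_of_nonneg_left stepC hS0
  have h7 : (((M₂ : ℝ) - (M₁ : ℝ)) * ‖u‖ ^ 2) ^ 2
      ≤ S * (16 * C ^ 2 * (M₂ : ℝ) ^ 2 * ‖u‖ ^ 2) := stepB.trans h6
  have h8 : (((M₂ : ℝ) - (M₁ : ℝ)) ^ 2 * ‖u‖ ^ 2) * ‖u‖ ^ 2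
      ≤ (S * (16 * C ^ 2 * (M₂ : ℝ) ^ 2)) * ‖u‖ ^ 2 := by
    calc (((M₂ : ℝ) - (M₁ : ℝ)) ^ 2 * ‖u‖ ^ 2) * ‖u‖ ^ 2
        = (((M₂ : ℝ) - (M₁ : ℝ)) * ‖u‖ ^ 2) ^ 2 := by ring
      _ ≤ S * (16 * C ^ 2 * (M₂ : ℝ) ^ 2 * ‖u‖ ^ 2) := h7
      _ = (S * (16 * C ^ 2 * (M₂ : ℝ) ^ 2)) * ‖u‖ ^ 2 := by ring
  have h9 : ((M₂ : ℝ) - (M₁ : ℝ)) ^ 2 * ‖u‖ ^ 2 ≤ S * (16 * C ^ 2 * (M₂ : ℝ) ^ 2) :=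
    le_of_mul_le_mul_right h8 (by positivity)
  rw [← Finset.sum_div, ← hS, div_le_div_iff₀ (by positivity) (by positivity)]
  exact h9
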